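/- Let n₁, n₂ be positive integers and let H be the bipartite graph with parts A = {1, …, n₁} and B = {n₁+1, …, n₁+n₂}, where i ∈ A and j ∈ B are adjacent if and only if j - i is a power of 2. Then for every A' ⊆ A and B' ⊆ B, the number of edges of H between A' and B' is at most 2(|A'| + |B'|). -/
import Mathlib

private lemma pow2_window_eq (s t : ℕ) (h1 : 2^s < 2*2^t) (h2 : 2^t < 2*2^s) : s = t := by
  have a : 2^s < 2^(t+1) := by rw [pow_succ]; omega
  have b : 2^t < 2^(s+1) := by rw [pow_succ]; omega
  have ha := (Nat.pow_lt_pow_iff_right (by norm_num : (1:ℕ) < 2)).mp a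
  have hb := (Nat.pow_lt_pow_iff_right (by norm_num : (1:ℕ) < 2)).mp b
  omega

open Classical in
/-- In the bipartite graph with parts A = {1,…,n₁}, B = {n₁+1,…,n₁+n₂}, where
i ∈ A is adjacent to j ∈ B iff j - i is a power of 2, every pair of subsets
A' ⊆ A, B' ⊆ B spans at most 2(|A'| + |B'|) edges. -/
theorem pow2_bipartite_sparse (n₁ n₂ : ℕ) (hn₁ : 0 < n₁) (hn₂ : 0 < n₂)
    (A' B' : Finset ℕ) (hA : A' ⊆ Finset.Icc 1 n₁)
    (hB : B' ⊆ Finset.Icc (n₁ + 1) (n₁ + n₂)) :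
    ((A' ×ˢ B').filter (fun p => ∃ t : ℕ, p.2 - p.1 = 2 ^ t)).card
      ≤ 2 * (A'.card + B'.card) := by
  classical
  set S := (A' ×ˢ B').filter (fun p => ∃ t : ℕ, p.2 - p.1 = 2 ^ t) with hS
  have key : ∀ p ∈ S, p.1 ∈ A' ∧ p.2 ∈ B' ∧ ∃ t : ℕ, p.2 - p.1 = 2^t := by
    intro p hp
    simp only [hS, Finset.mem_filter, Finset.mem_product] at hp
    exact ⟨hp.1.1, hp.1.2, hp.2⟩
  have hcard : S.card ≤ (A'.disjSum B').card := by
    apply Finset.card_le_card_of_injOn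
      (fun p => if p.2 - p.1 < 2*(p.2 - n₁) then Sum.inr p.2 else Sum.inl p.1)
    · intro p hp
      obtain ⟨h1, h2, _⟩ := key p hp
      by_cases c : p.2 - p.1 < 2*(p.2 - n₁) <;> simp [c, h1, h2]
    · intro p hp q hq hfq
      obtain ⟨hp1, hp2, t, ht⟩ := key p hp
      obtain ⟨hq1, hq2, s, hs⟩ := key q hq
      have hpA := Finset.mem_Icc.mp (hA hp1)
      have hpB := Finset.mem_Icc.mp (hB hp2)
      have hqA := Finset.mem_Icc.mp (hA hq1)
      have hqB := Finset.mem_Icc.mp (hB hq2)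
      simp only at hfq
      by_cases c1 : p.2 - p.1 < 2*(p.2 - n₁) <;>
        by_cases c2 : q.2 - q.1 < 2*(q.2 - n₁)
      · -- both charged to the B-side endpoint: p.2 = q.2
        rw [if_pos c1, if_pos c2] at hfq
        have hj : p.2 = q.2 := by injection hfq
        have h1 : 2^s < 2*2^t := by omega
        have h2 : 2^t < 2*2^s := by omega
        have := pow2_window_eq s t h1 h2
        subst this
        have : p.1 = q.1 := by omega
        exact Prod.ext this hj
      · rw [if_pos c1, if_neg c2] at hfq
        exact absurd hfq (by simp)
      · rw [if_neg c1, if_pos c2] at hfq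
        exact absurd hfq (by simp)
      · -- both charged to the A-side endpoint: p.1 = q.1
        rw [if_neg c1, if_neg c2] at hfq
        have hi : p.1 = q.1 := by injection hfq
        have h1 : 2^s < 2*2^t := by omega
        have h2 : 2^t < 2*2^s := by omega
        have := pow2_window_eq s t h1 h2
        subst this
        have : p.2 = q.2 := by omega
        exact Prod.ext hi this
  rw [Finset.card_disjSum] at hcard
  omega
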